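/- For all ξ > 0, log(1 + 4/(√2(ξ + ξ⁻¹) − 2)) ≥ 2√2/(ξ + ξ⁻¹). -/

import Mathlib

open Real

lemma key_log_ineq (y : ℝ) (hy : 1 ≤ y) : 2 * (y - 1) / (y + 1) ≤ Real.log y := by
  set f : ℝ → ℝ := fun x => Real.log x - 2 * (x - 1) / (x + 1) with hf
  have hd : ∀ x : ℝ, 0 < x → HasDerivAt f ((x - 1) ^ 2 / (x * (x + 1) ^ 2)) x := by
    intro x hx
    have h1 : HasDerivAt Real.log (1 / x) x := by
      simpa using Real.hasDerivAt_log (ne_of_gt hx)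
    have h2 : HasDerivAt (fun x : ℝ => 2 * (x - 1) / (x + 1))
        ((2 * (x + 1) - 2 * (x - 1) * 1) / (x + 1) ^ 2) x := by
      simpa [Pi.div_def] using ((hasDerivAt_id x).sub_const 1 |>.const_mul 2).div
        ((hasDerivAt_id x).add_const 1) (by positivity)
    have := h1.sub h2
    refine this.congr_deriv ?_
    have hx1 : x + 1 ≠ 0 := by positivity
    field_simp
    ring
  have hmono : MonotoneOn f (Set.Ici 1) := by
    apply monotoneOn_of_deriv_nonneg (convex_Ici 1)
    · exact fun x hx => (hd x (by simp at hx; linarith)).continuousAt.continuousWithinAt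
    · intro x hx
      rw [interior_Ici] at hx
      simp at hx
      exact (hd x (by linarith)).differentiableAt.differentiableWithinAt
    · intro x hx
      rw [interior_Ici] at hx
      simp at hx
      rw [(hd x (by linarith)).deriv]
      positivity
  have h0 : f 1 = 0 := by simp [hf]
  have := hmono (Set.self_mem_Ici) hy hy
  rw [h0] at this
  simpa [hf] using this

theorem stmt9 (ξ : ℝ) (hξ : 0 < ξ) :
    2 * Real.sqrt 2 / (ξ + ξ⁻¹) ≤ Real.log (1 + 4 / (Real.sqrt 2 * (ξ + ξ⁻¹) - 2)) := by
  set t := ξ + ξ⁻¹ with htdef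
  have ht : 2 ≤ t := by
    rw [htdef]
    nlinarith [sq_nonneg (ξ - 1), mul_inv_cancel₀ (ne_of_gt hξ)]
  have hs2 : (Real.sqrt 2) ^ 2 = 2 := Real.sq_sqrt (by norm_num)
  have hs1 : 1 < Real.sqrt 2 := by nlinarith [Real.sqrt_nonneg 2]
  have hst : 2 < Real.sqrt 2 * t := by nlinarith
  have hden : 0 < Real.sqrt 2 * t - 2 := by linarith
  set y := 1 + 4 / (Real.sqrt 2 * t - 2) with hydef
  have hy : 1 ≤ y := by
    rw [hydef]
    have : 0 < 4 / (Real.sqrt 2 * t - 2) := by positivity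
    linarith
  have hkey := key_log_ineq y hy
  have heq : 2 * Real.sqrt 2 / t = 2 * (y - 1) / (y + 1) := by
    rw [hydef]
    have ht0 : (0:ℝ) < t := by linarith
    field_simp
    nlinarith [hs2]
  rw [heq]
  exact hkey
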